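/- Fix t₁ < ⋯ < tₙ (n ≥ 3) and T ∈ ℝⁿ such that T does not have a coordinate maximum strictly between two minima nor a minimum strictly between two maxima. Define E_∞ : (−∞, 0) → [0, ∞) by E_∞(k) = dist_∞(T, G_k), where G_k = span{(e^{k t₁},…,e^{k tₙ}), (1,…,1)} and dist_∞ is the distance with respect to the max norm. Then E_∞ is strictly quasiconvex: for all k₁ < k₂ < k₃ < 0, E_∞(k₂) < max {E_∞(k₁), E_∞(k₃)}. -/

import Mathlib

open Real Set

noncomputable def lam (ti tq tj k : ℝ) : ℝ :=
  (Real.exp (k * tq) - Real.exp (k * tj)) / (Real.exp (k * ti) - Real.exp (k * tj))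

lemma lam_den_pos {ti tq tj k : ℝ} (h1 : ti < tq) (h2 : tq < tj) (hk : k < 0) :
    0 < Real.exp (k * ti) - Real.exp (k * tj) := by
  have : k * tj < k * ti := by nlinarith
  have := Real.exp_lt_exp.mpr this
  linarith

lemma lam_num_pos {ti tq tj k : ℝ} (h1 : ti < tq) (h2 : tq < tj) (hk : k < 0) :
    0 < Real.exp (k * tq) - Real.exp (k * tj) := by
  have : k * tj < k * tq := by nlinarith
  have := Real.exp_lt_exp.mpr this
  linarith

lemma lam_pos {ti tq tj k : ℝ} (h1 : ti < tq) (h2 : tq < tj) (hk : k < 0) :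
    0 < lam ti tq tj k :=
  div_pos (lam_num_pos h1 h2 hk) (lam_den_pos h1 h2 hk)

lemma lam_lt_one {ti tq tj k : ℝ} (h1 : ti < tq) (h2 : tq < tj) (hk : k < 0) :
    lam ti tq tj k < 1 := by
  rw [lam, div_lt_one (lam_den_pos h1 h2 hk)]
  have : k * tq < k * ti := by nlinarith
  have := Real.exp_lt_exp.mpr this
  linarith

lemma lam_comb {ti tq tj k : ℝ} (h1 : ti < tq) (h2 : tq < tj) (hk : k < 0) :
    lam ti tq tj k * Real.exp (k * ti) + (1 - lam ti tq tj k) * Real.exp (k * tj)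
      = Real.exp (k * tq) := by
  have hd := lam_den_pos h1 h2 hk
  rw [lam]
  field_simp
  ring

lemma lam_strict_mono {ti tq tj : ℝ} (h1 : ti < tq) (h2 : tq < tj) {k k' : ℝ}
    (hkk : k < k') (hk' : k' < 0) : lam ti tq tj k < lam ti tq tj k' := by
  have key : StrictMonoOn (lam ti tq tj) (Set.Iio 0) := by
    have hderiv : ∀ x ∈ Set.Iio (0:ℝ), HasDerivAt (lam ti tq tj)
        (((tq * Real.exp (x * tq) - tj * Real.exp (x * tj)) *
            (Real.exp (x * ti) - Real.exp (x * tj)) -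
          (Real.exp (x * tq) - Real.exp (x * tj)) *
            (ti * Real.exp (x * ti) - tj * Real.exp (x * tj))) /
          (Real.exp (x * ti) - Real.exp (x * tj)) ^ 2) x := by
      intro x hx
      have hd := (lam_den_pos h1 h2 hx).ne'
      have eN : HasDerivAt (fun y : ℝ => Real.exp (y * tq) - Real.exp (y * tj))
          (tq * Real.exp (x * tq) - tj * Real.exp (x * tj)) x := by
        have a1 : HasDerivAt (fun y : ℝ => Real.exp (y * tq)) (Real.exp (x * tq) * tq) x :=
          by have := (Real.hasDerivAt_exp (x * tq)).comp x (hasDerivAt_mul_const tq); exact this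
        have a2 : HasDerivAt (fun y : ℝ => Real.exp (y * tj)) (Real.exp (x * tj) * tj) x :=
          by have := (Real.hasDerivAt_exp (x * tj)).comp x (hasDerivAt_mul_const tj); exact this
        have := a1.sub a2
        exact this.congr_deriv (by ring)
      have eD : HasDerivAt (fun y : ℝ => Real.exp (y * ti) - Real.exp (y * tj))
          (ti * Real.exp (x * ti) - tj * Real.exp (x * tj)) x := by
        have a1 : HasDerivAt (fun y : ℝ => Real.exp (y * ti)) (Real.exp (x * ti) * ti) x :=
          by have := (Real.hasDerivAt_exp (x * ti)).comp x (hasDerivAt_mul_const ti); exact this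
        have a2 : HasDerivAt (fun y : ℝ => Real.exp (y * tj)) (Real.exp (x * tj) * tj) x :=
          by have := (Real.hasDerivAt_exp (x * tj)).comp x (hasDerivAt_mul_const tj); exact this
        have := a1.sub a2
        exact this.congr_deriv (by ring)
      exact eN.div eD hd
    apply strictMonoOn_of_deriv_pos (convex_Iio 0)
    · intro x hx
      exact ((hderiv x hx).differentiableAt).continuousAt.continuousWithinAt
    · intro x hx
      rw [interior_Iio] at hx
      rw [(hderiv x hx).deriv]
      apply div_pos
      · -- numerator positivity
        set P := Real.exp (x * ti) with hP
        set Q := Real.exp (x * tq) with hQ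
        set R := Real.exp (x * tj) with hR
        have hQ1 : Q = P * Real.exp (x * (tq - ti)) := by
          rw [hQ, hP, ← Real.exp_add]; ring_nf
        have hQ2 : Q = R * Real.exp (x * (tq - tj)) := by
          rw [hQ, hR, ← Real.exp_add]; ring_nf
        have hE1 : 1 + x * (tq - ti) < Real.exp (x * (tq - ti)) := by
          have hne : x * (tq - ti) ≠ 0 :=
            ne_of_lt (mul_neg_of_neg_of_pos hx (by linarith))
          linarith [Real.add_one_lt_exp hne]
        have hE2 : 1 + x * (tq - tj) < Real.exp (x * (tq - tj)) := by
          have hne : x * (tq - tj) ≠ 0 :=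
            ne_of_gt (mul_pos_of_neg_of_neg hx (by linarith))
          linarith [Real.add_one_lt_exp hne]
        have hPpos : 0 < P := Real.exp_pos _
        have hRpos : 0 < R := Real.exp_pos _
        have key : (tq * Q - tj * R) * (P - R) - (Q - R) * (ti * P - tj * R)
            = P * R * ((tq - ti) * Real.exp (x * (tq - tj))
              + (tj - tq) * Real.exp (x * (tq - ti)) - (tj - ti)) := by
          linear_combination ((tq - ti) * P) * hQ2 + ((tj - tq) * R) * hQ1
        rw [key]
        apply mul_pos (mul_pos hPpos hRpos)
        nlinarith [mul_lt_mul_of_pos_left hE2 (show (0:ℝ) < tq - ti by linarith),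
          mul_lt_mul_of_pos_left hE1 (show (0:ℝ) < tj - tq by linarith)]
      · exact pow_pos (lam_den_pos h1 h2 hx) 2
  exact key (Set.mem_Iio.mpr (lt_trans hkk hk')) (Set.mem_Iio.mpr hk') hkk

-- the three-point error
noncomputable def e3 {n : ℕ} (t T : Fin n → ℝ) (i q j : Fin n) (k : ℝ) : ℝ :=
  |lam (t i) (t q) (t j) k * T i + (1 - lam (t i) (t q) (t j) k) * T j - T q| / 2

lemma e3_nonneg {n : ℕ} (t T : Fin n → ℝ) (i q j : Fin n) (k : ℝ) :
    0 ≤ e3 t T i q j k := by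
  unfold e3; positivity

/-- lower bound: every element of G k is at distance at least e3 from T -/
lemma lower_bound {n : ℕ} (t : Fin n → ℝ) (ht : StrictMono t) (T : Fin n → ℝ)
    {k : ℝ} (hk : k < 0) {i q j : Fin n} (hiq : i < q) (hqj : q < j)
    (v : Fin n → ℝ)
    (hv : v ∈ Submodule.span ℝ
      {(fun l => Real.exp (k * t l)), (fun _ => (1 : ℝ))}) :
    e3 t T i q j k ≤ ‖T - v‖ := by
  obtain ⟨a, b, hab⟩ := Submodule.mem_span_pair.mp hv
  have h1 : t i < t q := ht hiq
  have h2 : t q < t j := ht hqj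
  set L := lam (t i) (t q) (t j) k with hL
  have hL0 : 0 < L := lam_pos h1 h2 hk
  have hL1 : L < 1 := lam_lt_one h1 h2 hk
  have hcomb := lam_comb h1 h2 hk (ti := t i) (tq := t q) (tj := t j)
  have hvl : ∀ l, v l = a * Real.exp (k * t l) + b := by
    intro l
    have := congrFun hab l
    simpa using this.symm
  have hkey : L * T i + (1 - L) * T j - T q
      = L * (T - v) i + (1 - L) * (T - v) j - (T - v) q := by
    simp only [Pi.sub_apply, hvl]
    rw [← hL] at hcomb
    linear_combination a * hcomb
  have hni : |(T - v) i| ≤ ‖T - v‖ := by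
    simpa [Real.norm_eq_abs] using norm_le_pi_norm (T - v) i
  have hnj : |(T - v) j| ≤ ‖T - v‖ := by
    simpa [Real.norm_eq_abs] using norm_le_pi_norm (T - v) j
  have hnq : |(T - v) q| ≤ ‖T - v‖ := by
    simpa [Real.norm_eq_abs] using norm_le_pi_norm (T - v) q
  have habs : |L * (T - v) i + (1 - L) * (T - v) j - (T - v) q| ≤ 2 * ‖T - v‖ := by
    have e1 : |L * (T - v) i| = L * |(T - v) i| := by
      rw [abs_mul, abs_of_pos hL0]
    have e2 : |(1 - L) * (T - v) j| = (1 - L) * |(T - v) j| := by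
      rw [abs_mul, abs_of_pos (by linarith)]
    calc |L * (T - v) i + (1 - L) * (T - v) j - (T - v) q|
        ≤ |L * (T - v) i| + |(1 - L) * (T - v) j| + |(T - v) q| := by
          have := abs_add_le (L * (T - v) i + (1 - L) * (T - v) j) (-(T - v) q)
          have h' := abs_add_le (L * (T - v) i) ((1 - L) * (T - v) j)
          rw [abs_neg] at this
          calc |L * (T - v) i + (1 - L) * (T - v) j - (T - v) q|
              = |L * (T - v) i + (1 - L) * (T - v) j + -(T - v) q| := by ring_nf
            _ ≤ |L * (T - v) i + (1 - L) * (T - v) j| + |(T - v) q| := this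
            _ ≤ |L * (T - v) i| + |(1 - L) * (T - v) j| + |(T - v) q| := by linarith
      _ ≤ 2 * ‖T - v‖ := by
          rw [e1, e2]
          nlinarith [abs_nonneg ((T - v) i), abs_nonneg ((T - v) j)]
  unfold e3
  rw [← hL] at *
  rw [hkey]
  linarith

/-- three-point interpolation: a point in the plane whose residuals on i,q,j are exactly e3 -/
lemma triple_point {n : ℕ} (t : Fin n → ℝ) (ht : StrictMono t) (T : Fin n → ℝ)
    {k : ℝ} (hk : k < 0) {i q j : Fin n} (hiq : i < q) (hqj : q < j) :
    ∃ x : ℝ × ℝ,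
      |T i - (x.1 * Real.exp (k * t i) + x.2)| ≤ e3 t T i q j k ∧
      |T q - (x.1 * Real.exp (k * t q) + x.2)| ≤ e3 t T i q j k ∧
      |T j - (x.1 * Real.exp (k * t j) + x.2)| ≤ e3 t T i q j k := by
  have h1 : t i < t q := ht hiq
  have h2 : t q < t j := ht hqj
  set L := lam (t i) (t q) (t j) k with hL
  have hcomb : L * Real.exp (k * t i) + (1 - L) * Real.exp (k * t j)
      = Real.exp (k * t q) := lam_comb h1 h2 hk
  have hd : Real.exp (k * t i) - Real.exp (k * t j) ≠ 0 := (lam_den_pos h1 h2 hk).ne'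
  set s : ℝ := (L * T i + (1 - L) * T j - T q) / 2 with hs
  set a : ℝ := (T i - T j) / (Real.exp (k * t i) - Real.exp (k * t j)) with ha
  set b : ℝ := T i - s - a * Real.exp (k * t i) with hb
  have he3 : e3 t T i q j k = |s| := by
    unfold e3
    rw [← hL, hs, abs_div]
    norm_num
  refine ⟨(a, b), ?_, ?_, ?_⟩
  · have : T i - (a * Real.exp (k * t i) + b) = s := by rw [hb]; ring
    rw [this, he3]
  · have hj' : a * Real.exp (k * t j) + b = T j - s := by
      rw [hb, ha]
      field_simp
      ring
    have hq' : a * Real.exp (k * t q) + b = T q + s := by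
      have : a * Real.exp (k * t q) + b
          = L * (a * Real.exp (k * t i) + b) + (1 - L) * (a * Real.exp (k * t j) + b) := by
        rw [← hcomb]; ring
      rw [this, hj']
      have hbi : a * Real.exp (k * t i) + b = T i - s := by rw [hb]; ring
      rw [hbi, hs]; ring
    rw [hq']
    have : T q - (T q + s) = -s := by ring
    rw [this, abs_neg, he3]
  · have hj' : a * Real.exp (k * t j) + b = T j - s := by
      rw [hb, ha]
      field_simp
      ring
    rw [hj']
    have : T j - (T j - s) = s := by ring
    rw [this, he3]

/-- degenerate case: if the maximizing triple has T i = T j and T q = T i + 2C, with all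
triple errors at k₁ bounded by C, then i, j are global minima and q is a global maximum. -/
lemma degenerate_case {n : ℕ} (t : Fin n → ℝ) (ht : StrictMono t) (T : Fin n → ℝ)
    {k₁ : ℝ} (hk₁ : k₁ < 0) {C : ℝ} (hC : 0 ≤ C) {i q j : Fin n}
    (hiq : i < q) (hqj : q < j) (hij : T j = T i) (hq : T q = T i + 2 * C)
    (hb : ∀ a b c : Fin n, a < b → b < c → e3 t T a b c k₁ ≤ C) :
    (∀ l, T l ≤ T q) ∧ (∀ l, T i ≤ T l) ∧ (∀ l, T j ≤ T l) := by
  have hbound : ∀ a b c : Fin n, a < b → b < c →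
      |lam (t a) (t b) (t c) k₁ * T a + (1 - lam (t a) (t b) (t c) k₁) * T c - T b|
        ≤ 2 * C := by
    intro a b c h h'
    have := hb a b c h h'
    unfold e3 at this
    linarith
  have hlow : ∀ l, T i ≤ T l := by
    intro l
    rcases lt_trichotomy l q with hlq | hlq | hlq
    · have h := abs_le.mp (hbound l q j hlq hqj)
      set L := lam (t l) (t q) (t j) k₁ with hL
      have hL0 : 0 < L := lam_pos (ht hlq) (ht hqj) hk₁
      have hL1 : L < 1 := lam_lt_one (ht hlq) (ht hqj) hk₁
      nlinarith [h.1]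
    · rw [hlq, hq]; linarith
    · have h := abs_le.mp (hbound i q l hiq hlq)
      set L := lam (t i) (t q) (t l) k₁ with hL
      have hL0 : 0 < L := lam_pos (ht hiq) (ht hlq) hk₁
      have hL1 : L < 1 := lam_lt_one (ht hiq) (ht hlq) hk₁
      nlinarith [h.1]
  have hupp : ∀ l, T l ≤ T i + 2 * C := by
    intro l
    rcases lt_trichotomy l i with hli | hli | hli
    · have h := abs_le.mp (hbound l i q hli hiq)
      set L := lam (t l) (t i) (t q) k₁ with hL
      have hL0 : 0 < L := lam_pos (ht hli) (ht hiq) hk₁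
      have hL1 : L < 1 := lam_lt_one (ht hli) (ht hiq) hk₁
      nlinarith [h.2]
    · rw [hli]; linarith
    · rcases lt_trichotomy l j with hlj | hlj | hlj
      · have h := abs_le.mp (hbound i l j hli hlj)
        set L := lam (t i) (t l) (t j) k₁ with hL
        have hL0 : 0 < L := lam_pos (ht hli) (ht hlj) hk₁
        have hL1 : L < 1 := lam_lt_one (ht hli) (ht hlj) hk₁
        nlinarith [h.1]
      · rw [hlj, hij]; linarith
      · have h := abs_le.mp (hbound q j l hqj hlj)
        set L := lam (t q) (t j) (t l) k₁ with hL
        have hL0 : 0 < L := lam_pos (ht hqj) (ht hlj) hk₁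
        have hL1 : L < 1 := lam_lt_one (ht hqj) (ht hlj) hk₁
        nlinarith [h.2]
  refine ⟨fun l => ?_, hlow, fun l => hij ▸ hlow l⟩
  rw [hq]; exact hupp l

lemma sort3 {n : ℕ} (a b c : Fin n) (hab : a ≠ b) (hac : a ≠ c) (hbc : b ≠ c) :
    ∃ i q j : Fin n, i < q ∧ q < j ∧ ({a, b, c} : Finset (Fin n)) = {i, q, j} := by
  rcases lt_trichotomy a b with h1 | h1 | h1
  · rcases lt_trichotomy b c with h2 | h2 | h2
    · exact ⟨a, b, c, h1, h2, rfl⟩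
    · exact absurd h2 hbc
    · rcases lt_trichotomy a c with h3 | h3 | h3
      · exact ⟨a, c, b, h3, h2, by ext x; simp; tauto⟩
      · exact absurd h3 hac
      · exact ⟨c, a, b, h3, h1, by ext x; simp; tauto⟩
  · exact absurd h1 hab
  · rcases lt_trichotomy a c with h2 | h2 | h2
    · exact ⟨b, a, c, h1, h2, by ext x; simp; tauto⟩
    · exact absurd h2 hac
    · rcases lt_trichotomy b c with h3 | h3 | h3
      · exact ⟨b, c, a, h3, h2, by ext x; simp; tauto⟩
      · exact absurd h3 hbc
      · exact ⟨c, b, a, h3, h1, by ext x; simp; tauto⟩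

lemma upper_bound {n : ℕ} (hn : 3 ≤ n) (t : Fin n → ℝ) (ht : StrictMono t)
    (T : Fin n → ℝ) {k : ℝ} (hk : k < 0) {M : ℝ}
    (hM : ∀ i q j : Fin n, i < q → q < j → e3 t T i q j k ≤ M) :
    ∃ v ∈ Submodule.span ℝ {(fun l => Real.exp (k * t l)), (fun _ => (1 : ℝ))},
      ‖T - v‖ ≤ M := by
  have hM0 : 0 ≤ M := by
    have i0 : Fin n := ⟨0, by omega⟩
    refine le_trans (e3_nonneg t T ⟨0, by omega⟩ ⟨1, by omega⟩ ⟨2, by omega⟩ k) ?_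
    exact hM _ _ _ (by simp [Fin.lt_def]) (by simp [Fin.lt_def])
  set K : Fin n → Set (ℝ × ℝ) :=
    fun l => {x | |T l - (x.1 * Real.exp (k * t l) + x.2)| ≤ M} with hK
  have hconv : ∀ l, Convex ℝ (K l) := by
    intro l
    intro x hx y hy a b ha hb hab
    simp only [hK, Set.mem_setOf_eq] at *
    have key : T l - ((a • x + b • y).1 * Real.exp (k * t l) + (a • x + b • y).2)
        = a * (T l - (x.1 * Real.exp (k * t l) + x.2))
          + b * (T l - (y.1 * Real.exp (k * t l) + y.2)) := by
      simp [Prod.smul_fst, Prod.smul_snd, smul_eq_mul]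
      linear_combination (-(T l)) * hab
    rw [key]
    calc |a * (T l - (x.1 * Real.exp (k * t l) + x.2))
          + b * (T l - (y.1 * Real.exp (k * t l) + y.2))|
        ≤ |a * (T l - (x.1 * Real.exp (k * t l) + x.2))|
          + |b * (T l - (y.1 * Real.exp (k * t l) + y.2))| := abs_add_le _ _
      _ = a * |T l - (x.1 * Real.exp (k * t l) + x.2)|
          + b * |T l - (y.1 * Real.exp (k * t l) + y.2)| := by
            rw [abs_mul, abs_mul, abs_of_nonneg ha, abs_of_nonneg hb]
      _ ≤ a * M + b * M := by
            gcongr <;> assumption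
      _ = M := by rw [← add_mul, hab, one_mul]
  have hfr : Module.finrank ℝ (ℝ × ℝ) = 2 := by
    simp [Module.finrank_prod]
  have hinter : ∀ I ⊆ (Finset.univ : Finset (Fin n)),
      I.card ≤ Module.finrank ℝ (ℝ × ℝ) + 1 → (⋂ l ∈ I, K l).Nonempty := by
    intro I _ hI
    rw [hfr] at hI
    obtain ⟨J, hIJ, hJ3⟩ := Finset.exists_superset_card_eq hI
      (by simp [Fintype.card_fin]; omega)
    obtain ⟨a, b, c, hab, hac, hbc, hJ⟩ := Finset.card_eq_three.mp hJ3
    obtain ⟨i, q, j, hiq, hqj, hset⟩ := sort3 a b c hab hac hbc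
    obtain ⟨x, hxi, hxq, hxj⟩ := triple_point t ht T hk hiq hqj
    refine ⟨x, Set.mem_biInter fun l hl => ?_⟩
    have hlJ : l ∈ ({i, q, j} : Finset (Fin n)) := by
      rw [← hset, ← hJ]; exact hIJ hl
    simp only [Finset.mem_insert, Finset.mem_singleton] at hlJ
    have hMi := hM i q j hiq hqj
    rcases hlJ with rfl | rfl | rfl
    · exact le_trans hxi hMi
    · exact le_trans hxq hMi
    · exact le_trans hxj hMi
  obtain ⟨x, hx⟩ := Convex.helly_theorem' (𝕜 := ℝ) (F := K) (s := Finset.univ)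
    (fun l _ => hconv l) hinter
  refine ⟨fun l => x.1 * Real.exp (k * t l) + x.2, ?_, ?_⟩
  · exact Submodule.mem_span_pair.mpr ⟨x.1, x.2, by funext l; simp⟩
  · rw [pi_norm_le_iff_of_nonneg hM0]
    intro l
    simp only [Set.mem_iInter] at hx
    have hxl := hx l (Finset.mem_univ l)
    simp only [hK, Set.mem_setOf_eq] at hxl
    simpa [Real.norm_eq_abs] using hxl

lemma e3_neg {n : ℕ} (t T : Fin n → ℝ) (i q j : Fin n) (k : ℝ) :
    e3 t (-T) i q j k = e3 t T i q j k := by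
  unfold e3
  congr 1
  rw [← abs_neg]
  congr 1
  simp only [Pi.neg_apply]
  ring

set_option maxHeartbeats 2000000 in
theorem stmt_14 (n : ℕ) (hn : 3 ≤ n) (t : Fin n → ℝ) (ht : StrictMono t)
    (T : Fin n → ℝ)
    (hnomaxmin : ¬ ∃ i q j : Fin n, i < q ∧ q < j ∧
      (∀ l, T l ≤ T q) ∧ (∀ l, T i ≤ T l) ∧ (∀ l, T j ≤ T l))
    (hnominmax : ¬ ∃ i q j : Fin n, i < q ∧ q < j ∧
      (∀ l, T q ≤ T l) ∧ (∀ l, T l ≤ T i) ∧ (∀ l, T l ≤ T j))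
    (G : ℝ → Submodule ℝ (Fin n → ℝ))
    (hG : ∀ k, G k = Submodule.span ℝ
      {(fun i => Real.exp (k * t i)), (fun _ => (1 : ℝ))})
    (E : ℝ → ℝ) (hE : ∀ k, E k = sInf {d | ∃ v ∈ G k, d = ‖T - v‖}) :
    ∀ k₁ k₂ k₃ : ℝ, k₁ < k₂ → k₂ < k₃ → k₃ < 0 →
      E k₂ < max (E k₁) (E k₃) := by
  intro k₁ k₂ k₃ h12 h23 hk3
  have hk2 : k₂ < 0 := lt_trans h23 hk3
  have hk1 : k₁ < 0 := lt_trans h12 hk2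
  set S : Finset (Fin n × Fin n × Fin n) :=
    Finset.univ.filter (fun p => p.1 < p.2.1 ∧ p.2.1 < p.2.2) with hSdef
  have hS : S.Nonempty := by
    refine ⟨(⟨0, by omega⟩, ⟨1, by omega⟩, ⟨2, by omega⟩), ?_⟩
    rw [hSdef, Finset.mem_filter]
    exact ⟨Finset.mem_univ _, by simp [Fin.lt_def], by simp [Fin.lt_def]⟩
  set M : ℝ → ℝ := fun k => S.sup' hS (fun p => e3 t T p.1 p.2.1 p.2.2 k) with hMdef
  have hmemS : ∀ i q j : Fin n, i < q → q < j → ((i, q, j) : Fin n × Fin n × Fin n) ∈ S := by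
    intro i q j hiq hqj
    rw [hSdef, Finset.mem_filter]
    exact ⟨Finset.mem_univ _, hiq, hqj⟩
  -- lower bound : M k ≤ E k for k < 0
  have hME : ∀ k, k < 0 → M k ≤ E k := by
    intro k hk
    rw [hE]
    have hne : {d | ∃ v ∈ G k, d = ‖T - v‖}.Nonempty := ⟨‖T - 0‖, 0, (G k).zero_mem, rfl⟩
    simp only [hMdef]
    apply le_csInf hne
    rintro d ⟨v, hv, rfl⟩
    apply Finset.sup'_le
    rintro ⟨i, q, j⟩ hp
    rw [hSdef, Finset.mem_filter] at hp
    exact lower_bound t ht T hk hp.2.1 hp.2.2 v (by rw [hG k] at hv; exact hv)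
  -- upper bound at k₂ : E k₂ ≤ M k₂
  have hEM2 : E k₂ ≤ M k₂ := by
    obtain ⟨v, hv, hnv⟩ := upper_bound hn t ht T hk2 (M := M k₂)
      (fun i q j hiq hqj => by
        simp only [hMdef]
        exact (Finset.le_sup'_iff hS).mpr ⟨(i, q, j), hmemS i q j hiq hqj, le_rfl⟩)
    rw [hE]
    refine le_trans (csInf_le ⟨0, ?_⟩ ⟨v, by rw [hG]; exact hv, rfl⟩) hnv
    rintro d ⟨w, _, rfl⟩
    exact norm_nonneg _
  -- strict quasiconvexity of M
  have hMM : M k₂ < max (M k₁) (M k₃) := by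
    by_contra hcon
    push_neg at hcon
    rw [max_le_iff] at hcon
    obtain ⟨p, hp, hpeq⟩ := Finset.exists_mem_eq_sup' hS
      (fun p => e3 t T p.1 p.2.1 p.2.2 k₂)
    obtain ⟨i, q, j⟩ := p
    rw [hSdef, Finset.mem_filter] at hp
    have hiq : i < q := hp.2.1
    have hqj : q < j := hp.2.2
    have hb1 : ∀ a b c : Fin n, a < b → b < c → e3 t T a b c k₁ ≤ M k₂ := by
      intro a b c h h'
      refine le_trans ?_ hcon.1
      simp only [hMdef]
      exact (Finset.le_sup'_iff hS).mpr ⟨(a, b, c), hmemS a b c h h', le_rfl⟩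
    have hb3 : ∀ a b c : Fin n, a < b → b < c → e3 t T a b c k₃ ≤ M k₂ := by
      intro a b c h h'
      refine le_trans ?_ hcon.2
      simp only [hMdef]
      exact (Finset.le_sup'_iff hS).mpr ⟨(a, b, c), hmemS a b c h h', le_rfl⟩
    have hpeq' : M k₂ = e3 t T i q j k₂ := by
      simp only [hMdef]; exact hpeq
    have hC0 : 0 ≤ M k₂ := le_trans (e3_nonneg t T i q j k₂) (le_of_eq hpeq'.symm)
    by_cases hTij : T j = T i
    · -- degenerate triple
      have hinner : lam (t i) (t q) (t j) k₂ * T i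
          + (1 - lam (t i) (t q) (t j) k₂) * T j - T q = T i - T q := by
        rw [hTij]; ring
      have hC2 : |T i - T q| / 2 = M k₂ := by
        rw [hpeq']; unfold e3; rw [hinner]
      rcases le_or_gt (T i) (T q) with hcase | hcase
      · have hq : T q = T i + 2 * M k₂ := by
          have : |T i - T q| = T q - T i := by
            rw [abs_of_nonpos (by linarith)]; ring
          rw [this] at hC2; linarith
        obtain ⟨hA, hB, hC'⟩ := degenerate_case t ht T hk1 hC0 hiq hqj hTij hq hb1
        exact hnomaxmin ⟨i, q, j, hiq, hqj, hA, hB, hC'⟩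
      · have hq : (-T) q = (-T) i + 2 * M k₂ := by
          have : |T i - T q| = T i - T q := abs_of_pos (by linarith)
          rw [this] at hC2
          simp only [Pi.neg_apply]
          linarith
        have hb1' : ∀ a b c : Fin n, a < b → b < c → e3 t (-T) a b c k₁ ≤ M k₂ :=
          fun a b c h h' => (e3_neg t T a b c k₁) ▸ hb1 a b c h h'
        have hTij' : (-T) j = (-T) i := by simp [hTij]
        obtain ⟨hA, hB, hC'⟩ := degenerate_case t ht (-T) hk1 hC0 hiq hqj hTij' hq hb1'
        refine hnominmax ⟨i, q, j, hiq, hqj, fun l => ?_, fun l => ?_, fun l => ?_⟩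
        · have := hA l; simp only [Pi.neg_apply] at this; linarith
        · have := hB l; simp only [Pi.neg_apply] at this; linarith
        · have := hC' l; simp only [Pi.neg_apply] at this; linarith
    · -- nondegenerate triple: strict quasiconvexity
      have h1 : t i < t q := ht hiq
      have h2 : t q < t j := ht hqj
      set L1 := lam (t i) (t q) (t j) k₁ with hL1
      set L2 := lam (t i) (t q) (t j) k₂ with hL2
      set L3 := lam (t i) (t q) (t j) k₃ with hL3
      have hL12 : L1 < L2 := lam_strict_mono h1 h2 h12 hk2
      have hL23 : L2 < L3 := lam_strict_mono h1 h2 h23 hk3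
      set g1 := L1 * (T i - T j) + (T j - T q) with hg1
      set g2 := L2 * (T i - T j) + (T j - T q) with hg2
      set g3 := L3 * (T i - T j) + (T j - T q) with hg3
      have he1 : e3 t T i q j k₁ = |g1| / 2 := by
        unfold e3; rw [← hL1, hg1]; congr 2; ring
      have he2 : e3 t T i q j k₂ = |g2| / 2 := by
        unfold e3; rw [← hL2, hg2]; congr 2; ring
      have he3' : e3 t T i q j k₃ = |g3| / 2 := by
        unfold e3; rw [← hL3, hg3]; congr 2; ring
      have hg1b : |g1| ≤ 2 * M k₂ := by
        have := hb1 i q j hiq hqj; rw [he1] at this; linarith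
      have hg3b : |g3| ≤ 2 * M k₂ := by
        have := hb3 i q j hiq hqj; rw [he3'] at this; linarith
      have hg2b : |g2| = 2 * M k₂ := by
        rw [hpeq', he2]; ring
      have habs1 := neg_abs_le g1
      have habs1' := le_abs_self g1
      have habs3 := neg_abs_le g3
      have habs3' := le_abs_self g3
      have hlt : |g2| < 2 * M k₂ := by
        rcases lt_or_gt_of_ne (fun h : T i - T j = 0 => hTij (by linarith)) with hd | hd
        · -- T i - T j < 0 : g decreasing, g3 < g2 < g1
          have hg21 : g2 < g1 := by rw [hg1, hg2]; nlinarith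
          have hg32 : g3 < g2 := by rw [hg2, hg3]; nlinarith
          rw [abs_lt]; constructor <;> linarith
        · have hg12 : g1 < g2 := by rw [hg1, hg2]; nlinarith
          have hg23 : g2 < g3 := by rw [hg2, hg3]; nlinarith
          rw [abs_lt]; constructor <;> linarith
      linarith
  calc E k₂ ≤ M k₂ := hEM2
    _ < max (M k₁) (M k₃) := hMM
    _ ≤ max (E k₁) (E k₃) := max_le_max (hME k₁ hk1) (hME k₃ hk3)
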